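/- Let G be an inverse semigroup with idempotent set E. For g ∈ G define the ℂ-linear operator α_g on the space of finitely supported functions ξ : E → ℂ by (α_g ξ)(e) := ξ(g* e g) if e · (g g*) = e, and (α_g ξ)(e) := 0 otherwise. Then: (i) α_{g h} = α_g ∘ α_h for all g, h ∈ G; and (ii) for every idempotent e ∈ E and all finitely supported ξ, η : E → ℂ one has (α_e ξ) · η = ξ · (α_e η), where · denotes the pointwise product of functions. -/

import Mathlib

/-- An inverse semigroup: a semigroup with an involution `g ↦ g*` such that
`g** = g`, `(gh)* = h* g*`, `g g* g = g`, and any two idempotents commute. -/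
class InverseSemigroup (G : Type*) extends Semigroup G, Star G where
  star_star : ∀ g : G, star (star g) = g
  star_mul : ∀ g h : G, star (g * h) = star h * star g
  mul_star_mul_self : ∀ g : G, g * star g * g = g
  idem_mul_comm : ∀ e f : G, e * e = e → f * f = f → e * f = f * e

namespace InverseSemigroup

variable {G : Type*} [InverseSemigroup G]

lemma idem_star_mul (g : G) : (star g * g) * (star g * g) = star g * g := by
  have h := mul_star_mul_self (star g)
  rw [star_star] at h
  rw [← mul_assoc, h]

lemma idem_mul_star (g : G) : (g * star g) * (g * star g) = g * star g := by
  have h := mul_star_mul_self g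
  rw [← mul_assoc, h]

lemma conj_idem (g : G) {e : G} (he : e * e = e) :
    (g * e * star g) * (g * e * star g) = g * e * star g := by
  have hsg := idem_star_mul g
  have hcomm := idem_mul_comm e (star g * g) he hsg
  have hg := mul_star_mul_self g
  calc (g * e * star g) * (g * e * star g)
      = g * (e * ((star g * g) * (e * star g))) := by simp only [mul_assoc]
    _ = g * (e * (star g * g) * (e * star g)) := by simp only [mul_assoc]
    _ = g * ((star g * g) * e * (e * star g)) := by rw [hcomm]
    _ = g * (star g * (g * ((e * e) * star g))) := by simp only [mul_assoc]
    _ = g * (star g * (g * (e * star g))) := by rw [he]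
    _ = (g * star g * g) * (e * star g) := by simp only [mul_assoc]
    _ = g * (e * star g) := by rw [hg]
    _ = g * e * star g := by rw [mul_assoc]

lemma conj_idem' (g : G) {e : G} (he : e * e = e) :
    (star g * e * g) * (star g * e * g) = star g * e * g := by
  have h := conj_idem (star g) he
  rwa [star_star] at h

/-- If `e ≤ g g*` then `g (g* e g) g* = e`. -/
lemma conj_conj (g : G) {e : G} (he : e * e = e) (hle : e * (g * star g) = e) :
    g * (star g * e * g) * star g = e := by
  have hgg := idem_mul_star g
  have hcomm := idem_mul_comm e (g * star g) he hgg
  calc g * (star g * e * g) * star g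
      = (g * star g) * (e * (g * star g)) := by simp only [mul_assoc]
    _ = (g * star g) * e := by rw [hle]
    _ = e * (g * star g) := by rw [hcomm]
    _ = e := hle

end InverseSemigroup

/-- The set of idempotents of `G`, as a type. -/
abbrev Idem (G : Type*) [InverseSemigroup G] : Type _ := {e : G // e * e = e}

open InverseSemigroup in
/-- The action `α_g` on finitely supported functions `ξ : E → ℂ` given by
`(α_g ξ)(e) = ξ(g* e g)` if `e (g g*) = e`, and `0` otherwise. -/
noncomputable def alphaMap {G : Type*} [InverseSemigroup G] (g : G) (ξ : Idem G →₀ ℂ) :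
    Idem G →₀ ℂ :=
  letI := Classical.decEq G
  Finsupp.onFinset
    (ξ.support.image fun e' => (⟨g * e'.1 * star g, conj_idem g e'.2⟩ : Idem G))
    (fun e => if e.1 * (g * star g) = e.1
      then ξ ⟨star g * e.1 * g, conj_idem' g e.2⟩ else 0)
    (by
      intro e he
      try dsimp only at he
      by_cases hc : e.1 * (g * star g) = e.1
      · rw [if_pos hc] at he
        refine Finset.mem_image.2 ⟨⟨star g * e.1 * g, conj_idem' g e.2⟩,
          Finsupp.mem_support_iff.2 he, ?_⟩
        exact Subtype.ext (conj_conj g e.2 hc)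
      · rw [if_neg hc] at he
        exact absurd rfl he)

section Aux

open InverseSemigroup

variable {G : Type*} [InverseSemigroup G]

lemma alphaMap_apply_pos (g : G) (ξ : Idem G →₀ ℂ) (f : Idem G)
    (hc : f.1 * (g * star g) = f.1) :
    alphaMap g ξ f = ξ ⟨star g * f.1 * g, conj_idem' g f.2⟩ := by
  classical
  simp [alphaMap, hc]

lemma alphaMap_apply_neg (g : G) (ξ : Idem G →₀ ℂ) (f : Idem G)
    (hc : ¬ f.1 * (g * star g) = f.1) :
    alphaMap g ξ f = 0 := by
  classical
  simp [alphaMap, hc]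

lemma star_idem {e : G} (he : e * e = e) : star e = e := by
  have h1 : star e * star e = star e := by rw [← InverseSemigroup.star_mul, he]
  have hcomm := idem_mul_comm e (star e) he h1
  have h2 : e * star e * e = e := mul_star_mul_self e
  have h3 : star e * e * star e = star e := by
    have := mul_star_mul_self (star e); rwa [InverseSemigroup.star_star] at this
  have he' : e = star e * e := by
    calc e = e * star e * e := h2.symm
    _ = star e * e * e := by rw [hcomm]
    _ = star e * (e * e) := by rw [mul_assoc]
    _ = star e * e := by rw [he]
  calc star e = star e * e * star e := h3.symm
    _ = star e * (e * star e) := by rw [mul_assoc]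
    _ = star e * (star e * e) := by rw [hcomm]
    _ = star e * star e * e := by rw [mul_assoc]
    _ = star e * e := by rw [h1]
    _ = e := he'.symm

lemma aux1 (g h : G) :
    (g * (h * star h) * star g) * (g * star g) = g * (h * star h) * star g := by
  have hc := idem_mul_comm (h * star h) (star g * g) (idem_mul_star h) (idem_star_mul g)
  have hg := mul_star_mul_self g
  calc (g * (h * star h) * star g) * (g * star g)
      = g * ((h * star h) * (star g * g) * star g) := by simp only [mul_assoc]
    _ = g * ((star g * g) * (h * star h) * star g) := by rw [hc]
    _ = (g * star g * g) * ((h * star h) * star g) := by simp only [mul_assoc]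
    _ = g * ((h * star h) * star g) := by rw [hg]
    _ = g * (h * star h) * star g := by rw [← mul_assoc]

lemma xg (g e : G) : (star g * e * g) * (star g * g) = star g * e * g := by
  calc (star g * e * g) * (star g * g)
      = star g * (e * (g * star g * g)) := by simp only [mul_assoc]
    _ = star g * (e * g) := by rw [mul_star_mul_self]
    _ = star g * e * g := by rw [mul_assoc]

lemma key1 {g h e : G} (hq : e * (g * (h * star h) * star g) = e) :
    e * (g * star g) = e := by
  calc e * (g * star g)
      = (e * (g * (h * star h) * star g)) * (g * star g) := by rw [hq]
    _ = e * ((g * (h * star h) * star g) * (g * star g)) := by rw [mul_assoc]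
    _ = e * (g * (h * star h) * star g) := by rw [aux1]
    _ = e := hq

lemma key2 {g h e : G} (hq : e * (g * (h * star h) * star g) = e) :
    (star g * e * g) * (h * star h) = star g * e * g := by
  have hc := idem_mul_comm (h * star h) (star g * g) (idem_mul_star h) (idem_star_mul g)
  calc (star g * e * g) * (h * star h)
      = ((star g * e * g) * (star g * g)) * (h * star h) := by rw [xg]
    _ = (star g * e * g) * ((star g * g) * (h * star h)) := by rw [mul_assoc]
    _ = (star g * e * g) * ((h * star h) * (star g * g)) := by rw [← hc]
    _ = star g * (e * (g * (h * star h) * star g)) * g := by simp only [mul_assoc]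
    _ = star g * e * g := by rw [hq]

lemma key3 {g h e : G} (he : e * e = e) (hp : e * (g * star g) = e)
    (hx : (star g * e * g) * (h * star h) = star g * e * g) :
    e * (g * (h * star h) * star g) = e := by
  have hpe : (g * star g) * e = e := by
    rw [← idem_mul_comm e (g * star g) he (idem_mul_star g)]; exact hp
  calc e * (g * (h * star h) * star g)
      = ((g * star g) * e) * (g * (h * star h) * star g) := by rw [hpe]
    _ = g * ((star g * e * g) * (h * star h) * star g) := by simp only [mul_assoc]
    _ = g * ((star g * e * g) * star g) := by rw [hx]
    _ = g * (star g * e * g) * star g := by rw [← mul_assoc]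
    _ = e := conj_conj g he hp

lemma cond_conv (g h f : G) : (g * h) * star (g * h) = g * (h * star h) * star g := by
  simp only [InverseSemigroup.star_mul, mul_assoc]

end Aux

/-- The action `α` of an inverse semigroup `G` on the finitely supported functions on its
idempotent set `E` satisfies: (i) `α_{g h} = α_g ∘ α_h`, and (ii) for every idempotent `e`
one has `(α_e ξ) · η = ξ · (α_e η)` pointwise.  (Hence `ε(E) = c₀(E)` is a `G`-algebra.) -/
theorem stmt_12 {G : Type*} [InverseSemigroup G] :
    (∀ g h : G, alphaMap (g * h) = alphaMap g ∘ alphaMap h) ∧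
    (∀ e : G, e * e = e → ∀ ξ η : Idem G →₀ ℂ, ∀ f : Idem G,
      alphaMap e ξ f * η f = ξ f * alphaMap e η f) := by
  open InverseSemigroup in
  constructor
  · intro g h
    funext ξ
    ext f
    rw [Function.comp_apply]
    have hconv : f.1 * ((g * h) * star (g * h)) = f.1 ↔
        f.1 * (g * (h * star h) * star g) = f.1 := by rw [cond_conv g h f.1]
    by_cases h1 : f.1 * (g * star g) = f.1
    · by_cases h2 : (star g * f.1 * g) * (h * star h) = star g * f.1 * g
      · rw [alphaMap_apply_pos _ _ _ (hconv.mpr (key3 f.2 h1 h2)),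
          alphaMap_apply_pos _ _ _ h1, alphaMap_apply_pos _ _ _ h2]
        congr 1
        exact Subtype.ext (by simp only [InverseSemigroup.star_mul, mul_assoc])
      · rw [alphaMap_apply_neg _ _ _ (fun hq => h2 (key2 (hconv.mp hq))),
          alphaMap_apply_pos _ _ _ h1, alphaMap_apply_neg _ _ _ h2]
    · rw [alphaMap_apply_neg _ _ _ (fun hq => h1 (key1 (hconv.mp hq))),
        alphaMap_apply_neg _ _ _ h1]
  · intro e he ξ η f
    have hse : star e = e := star_idem he
    by_cases hf : f.1 * e = f.1
    · have hcond : f.1 * (e * star e) = f.1 := by rw [hse, he]; exact hf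
      rw [alphaMap_apply_pos _ _ _ hcond, alphaMap_apply_pos _ _ _ hcond]
      have harg : (⟨star e * f.1 * e, conj_idem' e f.2⟩ : Idem G) = f := by
        refine Subtype.ext ?_
        calc star e * f.1 * e = e * f.1 * e := by rw [hse]
          _ = (f.1 * e) * e := by rw [idem_mul_comm e f.1 he f.2]
          _ = f.1 * (e * e) := by rw [mul_assoc]
          _ = f.1 * e := by rw [he]
          _ = f.1 := hf
      rw [harg]
    · have hcond : ¬ f.1 * (e * star e) = f.1 := by rw [hse, he]; exact hf
      rw [alphaMap_apply_neg _ _ _ hcond, alphaMap_apply_neg _ _ _ hcond,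
        zero_mul, mul_zero]
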